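/- Let η ≥ 1 and define Q(N) = (N - η)/(N·(η + 1) - η·(η - 1)) for N > η. Then: (i) Q(N) < 1/(1 + η) for every N > η, so the oligopoly allocation has Q_A^exp < Q_A^dom and is not conditionally efficient; and (ii) Q(N) tends to 1/(1 + η) as N → ∞, so that for δ > 0 and α_A ∈ ℝ the certificate price π(N) = δ·(1 - η·Q(N)) - α_A tends to δ/(1 + η) - α_A, the perfectly competitive outcome. -/

import Mathlib

open Filter

/-- Oligopoly exports under the TIC Agreement fall short of the conditionally
efficient level for any finite `N`, and converge to the perfectly competitive
outcome as `N → ∞`. -/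
theorem stmt_15 (η : ℝ) (hη : 1 ≤ η) :
    (∀ N : ℝ, η < N →
      (N - η) / (N * (η + 1) - η * (η - 1)) < 1 / (1 + η) ∧
      (N - η) / (N * (η + 1) - η * (η - 1))
        < 1 - η * ((N - η) / (N * (η + 1) - η * (η - 1)))) ∧
    Tendsto (fun N : ℝ => (N - η) / (N * (η + 1) - η * (η - 1))) atTop
      (nhds (1 / (1 + η))) ∧
    ∀ δ αA : ℝ, 0 < δ →
      Tendsto (fun N : ℝ => δ * (1 - η * ((N - η) / (N * (η + 1) - η * (η - 1)))) - αA)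
        atTop (nhds (δ / (1 + η) - αA)) := by
  have hη0 : (0:ℝ) < η := lt_of_lt_of_le one_pos hη
  have h1η : (0:ℝ) < 1 + η := by linarith
  -- part 1
  have part1 : ∀ N : ℝ, η < N →
      (N - η) / (N * (η + 1) - η * (η - 1)) < 1 / (1 + η) ∧
      (N - η) / (N * (η + 1) - η * (η - 1))
        < 1 - η * ((N - η) / (N * (η + 1) - η * (η - 1))) := by
    intro N hN
    have hD : 0 < N * (η + 1) - η * (η - 1) := by nlinarith
    have hQ : (N - η) / (N * (η + 1) - η * (η - 1)) < 1 / (1 + η) := by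
      rw [div_lt_div_iff₀ hD h1η]
      nlinarith
    refine ⟨hQ, ?_⟩
    have h2 := mul_lt_mul_of_pos_left hQ h1η
    rw [mul_one_div, div_self (ne_of_gt h1η)] at h2
    linarith
  refine ⟨part1, ?_, ?_⟩
  · -- limit
    have key : Tendsto (fun N : ℝ => (1 - η / N) / ((η + 1) - η * (η - 1) / N))
        atTop (nhds (1 / (1 + η))) := by
      have h1 : Tendsto (fun N : ℝ => 1 - η / N) atTop (nhds 1) := by
        simpa using tendsto_const_nhds.sub (tendsto_const_nhds.div_atTop (tendsto_id (α := ℝ)))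
      have h2 : Tendsto (fun N : ℝ => (η + 1) - η * (η - 1) / N) atTop (nhds (η + 1)) := by
        simpa using tendsto_const_nhds.sub
          (tendsto_const_nhds.div_atTop (tendsto_id (α := ℝ)))
      have := h1.div h2 (by linarith : (η + 1) ≠ 0)
      simpa [add_comm, Pi.div_def] using this
    refine key.congr' ?_
    filter_upwards [eventually_gt_atTop (0:ℝ)] with N hN
    have hN0 : N ≠ 0 := ne_of_gt hN
    field_simp
  · intro δ αA hδ
    have hQ : Tendsto (fun N : ℝ => (N - η) / (N * (η + 1) - η * (η - 1))) atTop
        (nhds (1 / (1 + η))) := by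
      have key : Tendsto (fun N : ℝ => (1 - η / N) / ((η + 1) - η * (η - 1) / N))
          atTop (nhds (1 / (1 + η))) := by
        have h1 : Tendsto (fun N : ℝ => 1 - η / N) atTop (nhds 1) := by
          simpa using tendsto_const_nhds.sub (tendsto_const_nhds.div_atTop (tendsto_id (α := ℝ)))
        have h2 : Tendsto (fun N : ℝ => (η + 1) - η * (η - 1) / N) atTop (nhds (η + 1)) := by
          simpa using tendsto_const_nhds.sub
            (tendsto_const_nhds.div_atTop (tendsto_id (α := ℝ)))
        have := h1.div h2 (by linarith : (η + 1) ≠ 0)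
        simpa [add_comm, Pi.div_def] using this
      refine key.congr' ?_
      filter_upwards [eventually_gt_atTop (0:ℝ)] with N hN
      have hN0 : N ≠ 0 := ne_of_gt hN
      field_simp
    have hT : Tendsto (fun N : ℝ => δ * (1 - η * ((N - η) / (N * (η + 1) - η * (η - 1)))) - αA)
        atTop (nhds (δ * (1 - η * (1 / (1 + η))) - αA)) :=
      (((tendsto_const_nhds (x := (1:ℝ))).sub (hQ.const_mul η)).const_mul δ).sub
        (tendsto_const_nhds (x := αA))
    have heq : δ * (1 - η * (1 / (1 + η))) - αA = δ / (1 + η) - αA := by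
      field_simp
      ring
    rwa [heq] at hT
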